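/- The real space ℓ₁ of absolutely summable sequences is not k-self-extensible for any k < 3/2; in particular, ℓ₁ fails the self-extension property, and se(ℓ₁) ≥ 3/2. -/

import Mathlib

open scoped ENNReal

noncomputable instance (priority := 10000) L1F.fastNACG (Y : Submodule ℝ (lp (fun _ : ℕ => ℝ) 1)) :
    NormedAddCommGroup ↥Y := Submodule.normedAddCommGroup Y

noncomputable instance (priority := 10000) L1F.fastNS (Y : Submodule ℝ (lp (fun _ : ℕ => ℝ) 1)) :
    NormedSpace ℝ ↥Y := Submodule.normedSpace Y
/-- For `k ≥ 1`, a real Banach space `X` is **`k`-self-extensible** if every continuous linear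
operator on a closed subspace of `X` extends to an operator on `X` of norm at most `k` times
the original norm. -/
def KSelfExt (X : Type*) [NormedAddCommGroup X] [NormedSpace ℝ X] (k : ℝ) : Prop :=
  ∀ (Y : Submodule ℝ X), IsClosed (Y : Set X) → ∀ T : Y →L[ℝ] Y,
    ∃ S : X →L[ℝ] X, (∀ y : Y, S y = (T y : X)) ∧ ‖S‖ ≤ k * ‖T‖

/-- A real Banach space `X` has the **self-extension property** if every continuous linear
operator on a closed subspace of `X` extends to an operator on `X` with the same norm. -/
def SelfExt (X : Type*) [NormedAddCommGroup X] [NormedSpace ℝ X] : Prop :=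
  ∀ (Y : Submodule ℝ X), IsClosed (Y : Set X) → ∀ T : Y →L[ℝ] Y,
    ∃ S : X →L[ℝ] X, (∀ y : Y, S y = (T y : X)) ∧ ‖S‖ = ‖T‖

/-- `se X = inf {k ≥ 1 : X is k-self-extensible}`, with value `∞` when no such `k` exists. -/
noncomputable def se (X : Type*) [NormedAddCommGroup X] [NormedSpace ℝ X] : ℝ≥0∞ :=
  sInf {c : ℝ≥0∞ | ∃ k : ℝ, 1 ≤ k ∧ c = ENNReal.ofReal k ∧ KSelfExt X k}


noncomputable section L1F
namespace L1F

abbrev X : Type := lp (fun _ : ℕ => ℝ) 1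
def e (i : ℕ) : X := lp.single 1 i 1
lemma e_apply (i j : ℕ) : (e i : ℕ → ℝ) j = if j = i then 1 else 0 := by
  rcases eq_or_ne j i with h | h
  · subst h; rw [if_pos rfl]; exact lp.single_apply_self 1 j 1
  · rw [if_neg h]; exact lp.single_apply_ne 1 i 1 h
lemma norm_e (i : ℕ) : ‖e i‖ = 1 := by
  have := lp.norm_single (E := fun _ : ℕ => ℝ) (p := 1) (by norm_num) i (1:ℝ)
  simpa [e] using this
def q1 : X := e 0 + e 1 - e 3 - e 4
def q2 : X := e 0 + e 2 - e 3 - e 5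
def q3 : X := e 1 + e 2 - e 4 - e 5
def d (j : ℕ) : X := e 0 - e j
lemma q1_apply (j : ℕ) : (q1 : ℕ → ℝ) j =
    (if j = 0 then (1:ℝ) else 0) + (if j = 1 then 1 else 0) - (if j = 3 then 1 else 0)
      - (if j = 4 then 1 else 0) := by
  simp [q1, lp.coeFn_sub, lp.coeFn_add, e_apply]
lemma q2_apply (j : ℕ) : (q2 : ℕ → ℝ) j =
    (if j = 0 then (1:ℝ) else 0) + (if j = 2 then 1 else 0) - (if j = 3 then 1 else 0)
      - (if j = 5 then 1 else 0) := by
  simp [q2, lp.coeFn_sub, lp.coeFn_add, e_apply]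
lemma q3_apply (j : ℕ) : (q3 : ℕ → ℝ) j =
    (if j = 1 then (1:ℝ) else 0) + (if j = 2 then 1 else 0) - (if j = 4 then 1 else 0)
      - (if j = 5 then 1 else 0) := by
  simp [q3, lp.coeFn_sub, lp.coeFn_add, e_apply]
lemma d_apply (i j : ℕ) : (d j : ℕ → ℝ) i =
    (if i = 0 then (1:ℝ) else 0) - (if i = j then 1 else 0) := by
  simp [d, lp.coeFn_sub, e_apply]

def Araw : X →ₗ[ℝ] X where
  toFun x := -((x 1 : ℝ) • q1 + (x 2 : ℝ) • q2 + (x 3 : ℝ) • q3)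
  map_add' x y := by
    simp only [lp.coeFn_add, Pi.add_apply, add_smul]
    module
  map_smul' c x := by
    simp only [lp.coeFn_smul, Pi.smul_apply, smul_eq_mul, RingHom.id_apply, mul_smul]
    module

lemma Araw_bound (x : X) : ‖Araw x‖ ≤ (‖q1‖ + ‖q2‖ + ‖q3‖) * ‖x‖ := by
  have h1 : ‖(x 1 : ℝ)‖ ≤ ‖x‖ := lp.norm_apply_le_norm one_ne_zero x 1
  have h2 : ‖(x 2 : ℝ)‖ ≤ ‖x‖ := lp.norm_apply_le_norm one_ne_zero x 2
  have h3 : ‖(x 3 : ℝ)‖ ≤ ‖x‖ := lp.norm_apply_le_norm one_ne_zero x 3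
  have : ‖Araw x‖ ≤ ‖(x 1 : ℝ) • q1‖ + ‖(x 2 : ℝ) • q2‖ + ‖(x 3 : ℝ) • q3‖ := by
    simp only [Araw, LinearMap.coe_mk, AddHom.coe_mk, norm_neg]
    exact (norm_add_le _ _).trans (by linarith [norm_add_le ((x 1 : ℝ) • q1) ((x 2 : ℝ) • q2)])
  simp only [norm_smul] at this
  have n1 : (0:ℝ) ≤ ‖q1‖ := norm_nonneg _
  have n2 : (0:ℝ) ≤ ‖q2‖ := norm_nonneg _
  have n3 : (0:ℝ) ≤ ‖q3‖ := norm_nonneg _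
  nlinarith [norm_nonneg x, mul_le_mul_of_nonneg_left h1 n1, mul_le_mul_of_nonneg_left h2 n2,
    mul_le_mul_of_nonneg_left h3 n3]

def A : X →L[ℝ] X := Araw.mkContinuous (‖q1‖ + ‖q2‖ + ‖q3‖) Araw_bound

lemma A_apply (x : X) : A x = -((x 1 : ℝ) • q1 + (x 2 : ℝ) • q2 + (x 3 : ℝ) • q3) := rfl

lemma A_coord (x : X) (j : ℕ) : (A x : ℕ → ℝ) j =
    -((x 1 : ℝ) * (q1 : ℕ → ℝ) j + (x 2 : ℝ) * (q2 : ℕ → ℝ) j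
      + (x 3 : ℝ) * (q3 : ℕ → ℝ) j) := by
  rw [A_apply]
  simp [lp.coeFn_neg, lp.coeFn_add, lp.coeFn_smul]
  rfl

lemma norm_eq_sum_six (z : X) (hz : ∀ i, 6 ≤ i → (z : ℕ → ℝ) i = 0) :
    ‖z‖ = ∑ i ∈ Finset.range 6, |(z : ℕ → ℝ) i| := by
  have hp : (0:ℝ) < (1 : ℝ≥0∞).toReal := by norm_num
  rw [lp.norm_eq_tsum_rpow hp z]
  simp only [ENNReal.toReal_one, Real.rpow_one]
  rw [tsum_eq_sum (s := Finset.range 6) (by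
    intro i hi
    rw [hz i (by simpa using hi)]
    simp)]
  simp [Real.norm_eq_abs]

lemma sum_six_le_norm (z : X) : ∑ i ∈ Finset.range 6, |(z : ℕ → ℝ) i| ≤ ‖z‖ := by
  have hp : (0:ℝ) < (1 : ℝ≥0∞).toReal := by norm_num
  rw [lp.norm_eq_tsum_rpow hp z]
  simp only [ENNReal.toReal_one, Real.rpow_one]
  have hs : Summable fun i => ‖(z : ℕ → ℝ) i‖ := by
    have := (lp.memℓp z).summable hp
    simpa using this
  have := Summable.sum_le_tsum (Finset.range 6) (fun i _ => norm_nonneg ((z : ℕ → ℝ) i)) hs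
  simpa [Real.norm_eq_abs] using this

def Y : Submodule ℝ X := Submodule.span ℝ ({d 1, d 2, d 3, d 4, d 5} : Set X)

lemma mem_Y_props {x : X} (hx : x ∈ Y) :
    (∀ i, 6 ≤ i → (x : ℕ → ℝ) i = 0) ∧
      (x : ℕ → ℝ) 0 + (x : ℕ → ℝ) 1 + (x : ℕ → ℝ) 2 + (x : ℕ → ℝ) 3 + (x : ℕ → ℝ) 4
        + (x : ℕ → ℝ) 5 = 0 := by
  induction hx using Submodule.span_induction with
  | mem x h =>
    have : ∀ j : ℕ, 1 ≤ j → j ≤ 5 → ((∀ i, 6 ≤ i → (d j : ℕ → ℝ) i = 0) ∧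
        (d j : ℕ → ℝ) 0 + (d j : ℕ → ℝ) 1 + (d j : ℕ → ℝ) 2 + (d j : ℕ → ℝ) 3
          + (d j : ℕ → ℝ) 4 + (d j : ℕ → ℝ) 5 = 0) := by
      intro j hj1 hj5
      constructor
      · intro i hi
        rw [d_apply]
        rw [if_neg (by omega), if_neg (by omega)]
        ring
      · simp only [d_apply]
        interval_cases j <;> norm_num
    rcases h with h | h | h | h | h <;> subst h
    · exact this 1 (by norm_num) (by norm_num)
    · exact this 2 (by norm_num) (by norm_num)
    · exact this 3 (by norm_num) (by norm_num)
    · exact this 4 (by norm_num) (by norm_num)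
    · exact this 5 (by norm_num) (by norm_num)
  | zero => simp [lp.coeFn_zero]
  | add x y hx hy ihx ihy =>
    refine ⟨fun i hi => ?_, ?_⟩
    · simp only [lp.coeFn_add, Pi.add_apply, ihx.1 i hi, ihy.1 i hi, add_zero]
    · simp only [lp.coeFn_add, Pi.add_apply]
      linarith [ihx.2, ihy.2]
  | smul a x hx ihx =>
    refine ⟨fun i hi => ?_, ?_⟩
    · simp only [lp.coeFn_smul, Pi.smul_apply, smul_eq_mul, ihx.1 i hi, mul_zero]
    · simp only [lp.coeFn_smul, Pi.smul_apply, smul_eq_mul]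
      linear_combination a * ihx.2

lemma d_mem {j : ℕ} (h : j ∈ ({1, 2, 3, 4, 5} : Set ℕ)) : d j ∈ Y := by
  apply Submodule.subset_span
  rcases h with h | h | h | h | h <;> subst h <;> simp

lemma q1_mem : q1 ∈ Y := by
  have : q1 = -(d 1) + d 3 + d 4 := by
    simp only [q1, d]
    abel
  rw [this]
  exact Submodule.add_mem _ (Submodule.add_mem _
    (Submodule.neg_mem _ (d_mem (by norm_num))) (d_mem (by norm_num))) (d_mem (by norm_num))

lemma q2_mem : q2 ∈ Y := by
  have : q2 = -(d 2) + d 3 + d 5 := by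
    simp only [q2, d]
    abel
  rw [this]
  exact Submodule.add_mem _ (Submodule.add_mem _
    (Submodule.neg_mem _ (d_mem (by norm_num))) (d_mem (by norm_num))) (d_mem (by norm_num))

lemma q3_mem : q3 ∈ Y := by
  have : q3 = -(d 1) - d 2 + d 4 + d 5 := by
    simp only [q3, d]
    abel
  rw [this]
  exact Submodule.add_mem _ (Submodule.add_mem _ (Submodule.sub_mem _
    (Submodule.neg_mem _ (d_mem (by norm_num))) (d_mem (by norm_num))) (d_mem (by norm_num)))
    (d_mem (by norm_num))

lemma A_mem (x : X) : A x ∈ Y := by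
  rw [A_apply]
  exact Submodule.neg_mem _ (Submodule.add_mem _ (Submodule.add_mem _
    (Submodule.smul_mem _ _ q1_mem) (Submodule.smul_mem _ _ q2_mem))
    (Submodule.smul_mem _ _ q3_mem))

def T : Y →L[ℝ] Y := (A.comp Y.subtypeL).codRestrict Y fun y => A_mem y

lemma T_coe (y : Y) : (T y : X) = A (y : X) := rfl

lemma hlawka (a b c : ℝ) : |a+b| + |a+c| + |b+c| ≤ |a| + |b| + |c| + |a+b+c| := by
  rcases abs_cases (a+b) with ⟨h1, h1'⟩ | ⟨h1, h1'⟩ <;>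
  rcases abs_cases (a+c) with ⟨h2, h2'⟩ | ⟨h2, h2'⟩ <;>
  rcases abs_cases (b+c) with ⟨h3, h3'⟩ | ⟨h3, h3'⟩ <;>
  rcases abs_cases (a+b+c) with ⟨h4, h4'⟩ | ⟨h4, h4'⟩ <;>
  rcases abs_cases a with ⟨h5, h5'⟩ | ⟨h5, h5'⟩ <;>
  rcases abs_cases b with ⟨h6, h6'⟩ | ⟨h6, h6'⟩ <;>
  rcases abs_cases c with ⟨h7, h7'⟩ | ⟨h7, h7'⟩ <;>
  linarith

lemma normA_le {x : X} (hx : x ∈ Y) : ‖A x‖ ≤ 2 * ‖x‖ := by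
  obtain ⟨h6, hsum⟩ := mem_Y_props hx
  set a := (x : ℕ → ℝ) 1 with ha
  set b := (x : ℕ → ℝ) 2 with hb
  set c := (x : ℕ → ℝ) 3 with hc
  have hA6 : ∀ i, 6 ≤ i → (A x : ℕ → ℝ) i = 0 := by
    intro i hi
    rw [A_coord, q1_apply, q2_apply, q3_apply]
    simp only [if_neg (show ¬i = 0 by omega), if_neg (show ¬i = 1 by omega),
      if_neg (show ¬i = 2 by omega), if_neg (show ¬i = 3 by omega),
      if_neg (show ¬i = 4 by omega), if_neg (show ¬i = 5 by omega)]
    ring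
  have c0 : (A x : ℕ → ℝ) 0 = -(a + b) := by
    rw [A_coord, q1_apply, q2_apply, q3_apply]; norm_num; linarith [ha, hb, hc]
  have c1 : (A x : ℕ → ℝ) 1 = -(a + c) := by
    rw [A_coord, q1_apply, q2_apply, q3_apply]; norm_num; linarith [ha, hb, hc]
  have c2 : (A x : ℕ → ℝ) 2 = -(b + c) := by
    rw [A_coord, q1_apply, q2_apply, q3_apply]; norm_num; linarith [ha, hb, hc]
  have c3 : (A x : ℕ → ℝ) 3 = a + b := by
    rw [A_coord, q1_apply, q2_apply, q3_apply]; norm_num; ring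
  have c4 : (A x : ℕ → ℝ) 4 = a + c := by
    rw [A_coord, q1_apply, q2_apply, q3_apply]; norm_num; ring
  have c5 : (A x : ℕ → ℝ) 5 = b + c := by
    rw [A_coord, q1_apply, q2_apply, q3_apply]; norm_num; ring
  rw [norm_eq_sum_six _ hA6, norm_eq_sum_six _ h6]
  simp only [Finset.sum_range_succ, Finset.sum_range_zero, zero_add, c0, c1, c2, c3, c4, c5,
    abs_neg]
  have hl : |a + b| + |a + c| + |b + c| ≤ |a| + |b| + |c| + |a + b + c| := hlawka a b c
  have h0 : |a + b + c| = |(x : ℕ → ℝ) 0 + (x : ℕ → ℝ) 4 + (x : ℕ → ℝ) 5| := by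
    have h : a + b + c = -((x : ℕ → ℝ) 0 + (x : ℕ → ℝ) 4 + (x : ℕ → ℝ) 5) := by
      linarith [hsum]
    rw [h, abs_neg]
  have htr : |(x : ℕ → ℝ) 0 + (x : ℕ → ℝ) 4 + (x : ℕ → ℝ) 5| ≤
      |(x : ℕ → ℝ) 0| + |(x : ℕ → ℝ) 4| + |(x : ℕ → ℝ) 5| := by
    calc _ ≤ |(x : ℕ → ℝ) 0 + (x : ℕ → ℝ) 4| + |(x : ℕ → ℝ) 5| := abs_add_le _ _
    _ ≤ _ := by linarith [abs_add_le ((x : ℕ → ℝ) 0) ((x : ℕ → ℝ) 4)]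
  linarith

lemma normT_le : ‖T‖ ≤ 2 := by
  apply ContinuousLinearMap.opNorm_le_bound _ (by norm_num)
  intro y
  have : ‖T y‖ = ‖A (y : X)‖ := by rw [← T_coe]; rfl
  rw [this]
  exact normA_le y.2

def phi (g : ℕ → ℝ) (z : X) : ℝ := ∑ i ∈ Finset.range 6, g i * (z : ℕ → ℝ) i

lemma phi_le {g : ℕ → ℝ} (hg : ∀ i, |g i| ≤ 1) (z : X) : phi g z ≤ ‖z‖ := by
  have h1 : phi g z ≤ ∑ i ∈ Finset.range 6, |(z : ℕ → ℝ) i| := by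
    apply Finset.sum_le_sum
    intro i _
    calc g i * (z : ℕ → ℝ) i ≤ |g i * (z : ℕ → ℝ) i| := le_abs_self _
    _ = |g i| * |(z : ℕ → ℝ) i| := abs_mul _ _
    _ ≤ 1 * |(z : ℕ → ℝ) i| := by
        exact mul_le_mul_of_nonneg_right (hg i) (abs_nonneg _)
    _ = |(z : ℕ → ℝ) i| := one_mul _
  exact h1.trans (sum_six_le_norm z)

def G0 : ℕ → ℝ := fun i =>
  if i = 0 then 1 else if i = 1 then 1 else if i = 2 then 1 else
  if i = 3 then -1 else if i = 4 then -1 else if i = 5 then -1 else 0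
def G1 : ℕ → ℝ := fun i =>
  if i = 0 then 1 else if i = 1 then 1 else if i = 2 then -1 else
  if i = 3 then -1 else if i = 4 then -1 else if i = 5 then 1 else 0
def G2 : ℕ → ℝ := fun i =>
  if i = 0 then 1 else if i = 1 then -1 else if i = 2 then 1 else
  if i = 3 then -1 else if i = 4 then 1 else if i = 5 then -1 else 0
def G3 : ℕ → ℝ := fun i =>
  if i = 0 then -1 else if i = 1 then 1 else if i = 2 then 1 else
  if i = 3 then 1 else if i = 4 then -1 else if i = 5 then -1 else 0

lemma G0_abs : ∀ i, |G0 i| ≤ 1 := by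
  intro i; unfold G0; split_ifs <;> norm_num
lemma G1_abs : ∀ i, |G1 i| ≤ 1 := by
  intro i; unfold G1; split_ifs <;> norm_num
lemma G2_abs : ∀ i, |G2 i| ≤ 1 := by
  intro i; unfold G2; split_ifs <;> norm_num
lemma G3_abs : ∀ i, |G3 i| ≤ 1 := by
  intro i; unfold G3; split_ifs <;> norm_num
lemma G1_neg_abs : ∀ i, |(fun j => -G1 j) i| ≤ 1 := by
  intro i; simp only [abs_neg]; exact G1_abs i
lemma G2_neg_abs : ∀ i, |(fun j => -G2 j) i| ≤ 1 := by
  intro i; simp only [abs_neg]; exact G2_abs i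
lemma G3_neg_abs : ∀ i, |(fun j => -G3 j) i| ≤ 1 := by
  intro i; simp only [abs_neg]; exact G3_abs i

lemma phi_G0_split (z : X) : phi G0 z = phi G1 z + phi G2 z + phi G3 z := by
  simp only [phi, ← Finset.sum_add_distrib]
  apply Finset.sum_congr rfl
  intro i hi
  have hi6 : i < 6 := Finset.mem_range.mp hi
  interval_cases i <;> simp [G0, G1, G2, G3] <;> ring

lemma phi_neg_sub (g : ℕ → ℝ) (u v : X) :
    phi (fun j => -g j) (u - v) = phi g v - phi g u := by
  simp only [phi, lp.coeFn_sub, Pi.sub_apply, ← Finset.sum_sub_distrib]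
  apply Finset.sum_congr rfl
  intro i _
  ring

lemma phi_G1_q1 : phi G1 q1 = 4 := by
  simp only [phi, Finset.sum_range_succ, Finset.sum_range_zero, zero_add, q1_apply, G1]
  norm_num
lemma phi_G2_q2 : phi G2 q2 = 4 := by
  simp only [phi, Finset.sum_range_succ, Finset.sum_range_zero, zero_add, q2_apply, G2]
  norm_num
lemma phi_G3_q3 : phi G3 q3 = 4 := by
  simp only [phi, Finset.sum_range_succ, Finset.sum_range_zero, zero_add, q3_apply, G3]
  norm_num

lemma key (S : X →L[ℝ] X) (h1 : S (d 1) = q1) (h2 : S (d 2) = q2) (h3 : S (d 3) = q3) :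
    (3 : ℝ) ≤ ‖S‖ := by
  set s0 := S (e 0) with hs0
  set s1 := S (e 1) with hs1
  set s2 := S (e 2) with hs2
  set s3 := S (e 3) with hs3
  have k1 : s0 - s1 = q1 := by rw [hs0, hs1, ← map_sub]; exact h1
  have k2 : s0 - s2 = q2 := by rw [hs0, hs2, ← map_sub]; exact h2
  have k3 : s0 - s3 = q3 := by rw [hs0, hs3, ← map_sub]; exact h3
  have hs1' : s1 = s0 - q1 := by rw [← k1]; abel
  have hs2' : s2 = s0 - q2 := by rw [← k2]; abel
  have hs3' : s3 = s0 - q3 := by rw [← k3]; abel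
  have b0 : phi G0 s0 ≤ ‖s0‖ := phi_le G0_abs s0
  have b1 : phi G1 q1 - phi G1 s0 ≤ ‖s1‖ := by
    have := phi_le G1_neg_abs s1
    rw [hs1'] at this ⊢
    rwa [phi_neg_sub G1 s0 q1] at this
  have b2 : phi G2 q2 - phi G2 s0 ≤ ‖s2‖ := by
    have := phi_le G2_neg_abs s2
    rw [hs2'] at this ⊢
    rwa [phi_neg_sub G2 s0 q2] at this
  have b3 : phi G3 q3 - phi G3 s0 ≤ ‖s3‖ := by
    have := phi_le G3_neg_abs s3
    rw [hs3'] at this ⊢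
    rwa [phi_neg_sub G3 s0 q3] at this
  have hsplit := phi_G0_split s0
  have v1 := phi_G1_q1
  have v2 := phi_G2_q2
  have v3 := phi_G3_q3
  have n0 : ‖s0‖ ≤ ‖S‖ := by
    calc ‖s0‖ ≤ ‖S‖ * ‖e 0‖ := S.le_opNorm _
    _ = ‖S‖ := by rw [norm_e]; ring
  have n1 : ‖s1‖ ≤ ‖S‖ := by
    calc ‖s1‖ ≤ ‖S‖ * ‖e 1‖ := S.le_opNorm _
    _ = ‖S‖ := by rw [norm_e]; ring
  have n2 : ‖s2‖ ≤ ‖S‖ := by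
    calc ‖s2‖ ≤ ‖S‖ * ‖e 2‖ := S.le_opNorm _
    _ = ‖S‖ := by rw [norm_e]; ring
  have n3 : ‖s3‖ ≤ ‖S‖ := by
    calc ‖s3‖ ≤ ‖S‖ * ‖e 3‖ := S.le_opNorm _
    _ = ‖S‖ := by rw [norm_e]; ring
  linarith

instance : FiniteDimensional ℝ Y :=
  FiniteDimensional.span_of_finite ℝ (Set.toFinite _)

lemma Y_closed : IsClosed (Y : Set X) := Submodule.closed_of_finiteDimensional Y

lemma A_d1 : A (d 1) = q1 := by
  rw [A_apply]
  have h1 : ((d 1 : X) : ℕ → ℝ) 1 = -1 := by rw [d_apply]; norm_num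
  have h2 : ((d 1 : X) : ℕ → ℝ) 2 = 0 := by rw [d_apply]; norm_num
  have h3 : ((d 1 : X) : ℕ → ℝ) 3 = 0 := by rw [d_apply]; norm_num
  rw [h1, h2, h3]
  module

lemma A_d2 : A (d 2) = q2 := by
  rw [A_apply]
  have h1 : ((d 2 : X) : ℕ → ℝ) 1 = 0 := by rw [d_apply]; norm_num
  have h2 : ((d 2 : X) : ℕ → ℝ) 2 = -1 := by rw [d_apply]; norm_num
  have h3 : ((d 2 : X) : ℕ → ℝ) 3 = 0 := by rw [d_apply]; norm_num
  rw [h1, h2, h3]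
  module

lemma A_d3 : A (d 3) = q3 := by
  rw [A_apply]
  have h1 : ((d 3 : X) : ℕ → ℝ) 1 = 0 := by rw [d_apply]; norm_num
  have h2 : ((d 3 : X) : ℕ → ℝ) 2 = 0 := by rw [d_apply]; norm_num
  have h3 : ((d 3 : X) : ℕ → ℝ) 3 = -1 := by rw [d_apply]; norm_num
  rw [h1, h2, h3]
  module

lemma main_bound (S : X →L[ℝ] X) (hS : ∀ y : Y, S y = (T y : X)) : (3 : ℝ) ≤ ‖S‖ := by
  have h1 : S (d 1) = q1 := by
    have := hS ⟨d 1, d_mem (by norm_num)⟩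
    rw [this, T_coe]
    exact A_d1
  have h2 : S (d 2) = q2 := by
    have := hS ⟨d 2, d_mem (by norm_num)⟩
    rw [this, T_coe]
    exact A_d2
  have h3 : S (d 3) = q3 := by
    have := hS ⟨d 3, d_mem (by norm_num)⟩
    rw [this, T_coe]
    exact A_d3
  exact key S h1 h2 h3

lemma hT2 : ‖T‖ ≤ 2 := normT_le

lemma notK_aux (k : ℝ) (hk : k < 3 / 2) (hKS : KSelfExt X k) : False := by
  obtain ⟨S, hSy, hSn⟩ := hKS Y Y_closed T
  have h3 : (3:ℝ) ≤ ‖S‖ := main_bound S hSy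
  have hT0 : (0:ℝ) ≤ ‖T‖ := norm_nonneg _
  have hlt : k * ‖T‖ < 3 := by
    rcases le_or_gt k 0 with h | h
    · have : k * ‖T‖ ≤ 0 := mul_nonpos_of_nonpos_of_nonneg h hT0
      linarith
    · calc k * ‖T‖ ≤ k * 2 := by nlinarith [hT2]
      _ < 3 := by linarith
  linarith

lemma notK : ∀ k : ℝ, k < 3 / 2 → ¬ KSelfExt X k := fun k hk hKS => notK_aux k hk hKS

lemma notSE_aux (hSE : SelfExt X) : False := by
  obtain ⟨S, hSy, hSn⟩ := hSE Y Y_closed T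
  have h3 : (3:ℝ) ≤ ‖S‖ := main_bound S hSy
  rw [hSn] at h3
  linarith [hT2]

lemma notSE : ¬ SelfExt X := fun h => notSE_aux h

end L1F
end L1F

/-- The real space `ℓ₁` is not `k`-self-extensible for any `k < 3/2`; in particular it fails
the self-extension property, and `se(ℓ₁) ≥ 3/2`. -/
theorem l1_fails_selfExt :
    (∀ k : ℝ, k < 3 / 2 → ¬ KSelfExt (lp (fun _ : ℕ => ℝ) 1) k) ∧
      ¬ SelfExt (lp (fun _ : ℕ => ℝ) 1) ∧
      ENNReal.ofReal (3 / 2) ≤ se (lp (fun _ : ℕ => ℝ) 1) := by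
  refine ⟨L1F.notK, L1F.notSE, ?_⟩
  refine le_sInf ?_
  rintro c ⟨k, hk1, rfl, hK⟩
  exact ENNReal.ofReal_le_ofReal (not_lt.1 fun h => L1F.notK k h hK)
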